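/- Let Ω ⊂ ℝⁿ be a bounded convex domain and u, v ∈ C(closure Ω) convex functions such that u ≥ v on ∂Ω and μ_u({u < v}) = 0. Then u ≥ v everywhere in Ω. -/

import Mathlib

open Set MeasureTheory
open scoped RealInnerProductSpace


lemma aux_convexOn {n : ℕ} {Ω : Set (EuclideanSpace ℝ (Fin n))} (hΩ : Convex ℝ Ω)
    {v : EuclideanSpace ℝ (Fin n) → ℝ} (hv : ConvexOn ℝ Ω v) {ε : ℝ} (hε : 0 ≤ ε) (c : ℝ)
    (p : EuclideanSpace ℝ (Fin n)) :
    ConvexOn ℝ Ω (fun y => v y + ε * (‖y‖ ^ 2 - c) - ⟪p, y⟫) := by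
  refine ⟨hΩ, fun x hx y hy a b ha hb hab => ?_⟩
  have h1 := hv.2 hx hy ha hb hab
  simp only [smul_eq_mul] at h1 ⊢
  have h2 : ‖a • x + b • y‖ ^ 2
      = a ^ 2 * ‖x‖ ^ 2 + 2 * (a * b) * ⟪x, y⟫ + b ^ 2 * ‖y‖ ^ 2 := by
    rw [← real_inner_self_eq_norm_sq]
    simp only [inner_add_left, inner_add_right, real_inner_smul_left, real_inner_smul_right,
      real_inner_self_eq_norm_sq, real_inner_comm x y]
    rw [norm_smul, norm_smul]
    simp only [Real.norm_eq_abs, mul_pow, sq_abs]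
    ring
  have h3 : ⟪p, a • x + b • y⟫ = a * ⟪p, x⟫ + b * ⟪p, y⟫ := by
    simp only [inner_add_right, real_inner_smul_right]
  rw [h2, h3]
  have h4 : 0 ≤ a * b * (‖x‖ ^ 2 - 2 * ⟪x, y⟫ + ‖y‖ ^ 2) := by
    nlinarith [real_inner_le_norm x y, sq_nonneg (‖x‖ - ‖y‖), mul_nonneg ha hb]
  have hb1 : b = 1 - a := by linarith
  subst hb1
  nlinarith [h1, mul_nonneg hε h4]

lemma le_on_closure' {n : ℕ} {Ω : Set (EuclideanSpace ℝ (Fin n))}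
    {G : EuclideanSpace ℝ (Fin n) → ℝ}
    (hG : ContinuousOn G (closure Ω)) (h : ∀ y ∈ Ω, 0 ≤ G y)
    {y : EuclideanSpace ℝ (Fin n)} (hy : y ∈ closure Ω) : 0 ≤ G y := by
  have hne : (nhdsWithin y Ω).NeBot := mem_closure_iff_nhdsWithin_neBot.mp hy
  have ht : Filter.Tendsto G (nhdsWithin y Ω) (nhds (G y)) :=
    (hG y hy).mono_left (nhdsWithin_mono _ subset_closure)
  exact ge_of_tendsto ht (Filter.eventually_of_mem self_mem_nhdsWithin h)

lemma exists_subgradient {n : ℕ} {Ω : Set (EuclideanSpace ℝ (Fin n))} (hΩo : IsOpen Ω)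
    {v : EuclideanSpace ℝ (Fin n) → ℝ} (hconv : ConvexOn ℝ Ω v)
    (hcont : ContinuousOn v Ω) {x₀ : EuclideanSpace ℝ (Fin n)} (hx₀ : x₀ ∈ Ω) :
    ∃ q, ∀ y ∈ Ω, v x₀ + ⟪q, y - x₀⟫ ≤ v y := by
  set S : Set (EuclideanSpace ℝ (Fin n) × ℝ) := {p | p.1 ∈ Ω ∧ v p.1 < p.2} with hS
  have hSconv : Convex ℝ S := hconv.convex_strict_epigraph
  have hSopen : IsOpen S := by
    rw [isOpen_iff_mem_nhds]
    rintro ⟨x, t⟩ ⟨hxΩ, hxt⟩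
    have hvx : ContinuousAt v x := hcont.continuousAt (hΩo.mem_nhds hxΩ)
    have hg : ContinuousAt (fun q : EuclideanSpace ℝ (Fin n) × ℝ => q.2 - v q.1) (x, t) :=
      continuousAt_snd.sub (hvx.comp continuousAt_fst)
    have h1 : (fun q : EuclideanSpace ℝ (Fin n) × ℝ => q.2 - v q.1) ⁻¹' Set.Ioi 0 ∈ nhds (x, t) :=
      hg.preimage_mem_nhds (Ioi_mem_nhds (by simpa using sub_pos.mpr hxt))
    have h2 : Ω ×ˢ (Set.univ : Set ℝ) ∈ nhds (x, t) :=
      prod_mem_nhds (hΩo.mem_nhds hxΩ) Filter.univ_mem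
    refine Filter.mem_of_superset (Filter.inter_mem h1 h2) ?_
    rintro ⟨z, s⟩ ⟨hz1, hz2⟩
    exact ⟨hz2.1, by simpa using sub_pos.mp hz1⟩
  have hnot : (x₀, v x₀) ∉ S := fun h => lt_irrefl _ h.2
  obtain ⟨f, hf⟩ := geometric_hahn_banach_open_point hSconv hSopen hnot
  set c : ℝ := f (0, 1) with hc
  have hft : ∀ (x : EuclideanSpace ℝ (Fin n)) (t : ℝ), f (x, t) = f (x, 0) + t * c := by
    intro x t
    have hxt : (x, t) = (x, (0 : ℝ)) + t • ((0 : EuclideanSpace ℝ (Fin n)), (1 : ℝ)) := by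
      simp [Prod.ext_iff]
    rw [hxt, map_add, f.map_smul]
    simp [hc, smul_eq_mul, mul_comm]
  have hfS : ∀ y ∈ Ω, ∀ s > (0:ℝ), f (y, 0) + (v y + s) * c < f (x₀, 0) + v x₀ * c := by
    intro y hy s hs
    have hmem : (y, v y + s) ∈ S := ⟨hy, show v y < v y + s by linarith⟩
    have h1 := hf _ hmem
    have h2 : f (y, v y + s) = f (y, 0) + (v y + s) * c := hft y _
    have h3 : f (x₀, v x₀) = f (x₀, 0) + v x₀ * c := hft x₀ _
    rw [h2, h3] at h1
    exact h1
  have hcneg : c < 0 := by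
    have := hfS x₀ hx₀ 1 one_pos
    nlinarith
  have key : ∀ y ∈ Ω, f (y, 0) + v y * c ≤ f (x₀, 0) + v x₀ * c := by
    intro y hy
    refine le_of_forall_pos_le_add fun ε hε => ?_
    have hcpos : 0 < -c := by linarith
    have hc0 : c ≠ 0 := ne_of_lt hcneg
    have hs : (0:ℝ) < ε / (-c) := div_pos hε hcpos
    have h1 := hfS y hy _ hs
    have hcc : (v y + ε / (-c)) * c = v y * c + -ε := by
      rw [add_mul]
      congr 1
      field_simp
    rw [hcc] at h1
    linarith
  set φ : EuclideanSpace ℝ (Fin n) →L[ℝ] ℝ := f.comp (ContinuousLinearMap.inl ℝ _ ℝ) with hφ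
  refine ⟨(-c)⁻¹ • (InnerProductSpace.toDual ℝ (EuclideanSpace ℝ (Fin n))).symm φ,
    fun y hy => ?_⟩
  have hcpos : 0 < -c := by linarith
  have hq : ⟪(-c)⁻¹ • (InnerProductSpace.toDual ℝ (EuclideanSpace ℝ (Fin n))).symm φ, y - x₀⟫
      = (-c)⁻¹ * (f (y, 0) - f (x₀, 0)) := by
    rw [real_inner_smul_left, InnerProductSpace.toDual_symm_apply]
    congr 1
    have h1 : ((y - x₀, (0:ℝ)) : EuclideanSpace ℝ (Fin n) × ℝ) = (y, 0) - (x₀, 0) := by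
      simp [Prod.ext_iff]
    simp only [hφ, ContinuousLinearMap.comp_apply, ContinuousLinearMap.inl_apply]
    rw [h1, map_sub]
  rw [hq]
  have h5 : f (y, 0) - f (x₀, 0) ≤ (v x₀ - v y) * c := by
    have := key y hy; linarith
  have h6 : (-c)⁻¹ * (f (y, 0) - f (x₀, 0)) ≤ (-c)⁻¹ * ((v x₀ - v y) * c) :=
    mul_le_mul_of_nonneg_left h5 (le_of_lt (inv_pos.2 hcpos))
  have h7 : (-c)⁻¹ * ((v x₀ - v y) * c) = v y - v x₀ := by
    have hc0 : c ≠ 0 := ne_of_lt hcneg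
    field_simp
    ring
  linarith

/-- The image of a set `S` under the subdifferential of `u` (relative to the domain `Ω`). -/
def subdiffImage {n : ℕ} (Ω : Set (EuclideanSpace ℝ (Fin n)))
    (u : EuclideanSpace ℝ (Fin n) → ℝ) (S : Set (EuclideanSpace ℝ (Fin n))) :
    Set (EuclideanSpace ℝ (Fin n)) :=
  ⋃ x ∈ S, {p | ∀ y ∈ Ω, u x + ⟪p, y - x⟫ ≤ u y}

/-- Domination principle: if `u ≥ v` on `∂Ω` and the Monge–Ampère measure of `u` gives no
mass to `{u < v}`, then `u ≥ v` in `Ω`. -/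
theorem stmt_12 {n : ℕ} (Ω : Set (EuclideanSpace ℝ (Fin n)))
    (hΩo : IsOpen Ω) (hΩc : Convex ℝ Ω) (hΩb : Bornology.IsBounded Ω)
    (u v : EuclideanSpace ℝ (Fin n) → ℝ)
    (hu_cont : ContinuousOn u (closure Ω)) (hv_cont : ContinuousOn v (closure Ω))
    (hu_conv : ConvexOn ℝ Ω u) (hv_conv : ConvexOn ℝ Ω v)
    (hbd : ∀ x ∈ frontier Ω, v x ≤ u x)
    (hmass : volume (subdiffImage Ω u {x ∈ Ω | u x < v x}) = 0) :
    ∀ x ∈ Ω, v x ≤ u x := by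
  by_contra hcon
  push_neg at hcon
  obtain ⟨x₀, hx₀Ω, hx₀⟩ := hcon
  obtain ⟨C, hC⟩ := isBounded_iff_forall_norm_le.1 hΩb.closure
  set R := C ^ 2 with hRdef
  have hR : ∀ x ∈ closure Ω, ‖x‖ ^ 2 ≤ R := fun x hx => by
    have h1 := hC x hx; nlinarith [norm_nonneg x]
  have hR0 : (0:ℝ) ≤ R := sq_nonneg C
  set δ := v x₀ - u x₀ with hδdef
  have hδ : 0 < δ := by simp only [hδdef]; linarith
  set ε := δ / (2 * (R + 1)) with hεdef
  have hε : 0 < ε := div_pos hδ (by linarith)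
  have hεR : ε * R < δ := by
    have h2 : ε * (2 * (R + 1)) = δ := by
      rw [hεdef]; field_simp
    nlinarith
  set w : EuclideanSpace ℝ (Fin n) → ℝ := fun y => v y + ε * (‖y‖ ^ 2 - R) with hwdef
  have hwv : ∀ y ∈ closure Ω, w y ≤ v y := fun y hy => by
    have := hR y hy; simp only [hwdef]; nlinarith
  have hx₀E : u x₀ < w x₀ := by
    have h1 : ‖x₀‖ ^ 2 ≤ R := hR x₀ (subset_closure hx₀Ω)
    simp only [hwdef]; nlinarith [sq_nonneg ‖x₀‖]
  have hw_cont : ContinuousOn w (closure Ω) := by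
    apply hv_cont.add
    exact (continuous_const.mul ((continuous_norm.pow 2).sub continuous_const)).continuousOn
  have hu_contΩ : ContinuousOn u Ω := hu_cont.mono subset_closure
  -- a closed ball around x₀ inside {u < w} ∩ Ω
  have hcontwu : ContinuousAt (fun y => w y - u y) x₀ := by
    have h1 : ContinuousAt u x₀ := hu_contΩ.continuousAt (hΩo.mem_nhds hx₀Ω)
    have h2 : ContinuousAt w x₀ :=
      (hw_cont.mono subset_closure).continuousAt (hΩo.mem_nhds hx₀Ω)
    exact h2.sub h1
  have hEnhds : {y | y ∈ Ω ∧ u y < w y} ∈ nhds x₀ := by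
    have h1 : (fun y => w y - u y) ⁻¹' Set.Ioi 0 ∈ nhds x₀ :=
      hcontwu.preimage_mem_nhds (Ioi_mem_nhds (by simpa using sub_pos.mpr hx₀E))
    have h2 : Ω ∈ nhds x₀ := hΩo.mem_nhds hx₀Ω
    filter_upwards [h1, h2] with y hy1 hy2
    exact ⟨hy2, by simpa using sub_pos.mp hy1⟩
  obtain ⟨r₀, hr₀, hball⟩ := Metric.mem_nhds_iff.1 hEnhds
  set rr := r₀ / 2 with hrrdef
  have hrr : 0 < rr := by positivity
  have hcb : Metric.closedBall x₀ rr ⊆ {y | y ∈ Ω ∧ u y < w y} := fun y hy =>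
    hball (Metric.closedBall_subset_ball (by simp only [hrrdef]; linarith) hy)
  have hcbΩ : Metric.closedBall x₀ rr ⊆ Ω := fun y hy => (hcb hy).1
  -- subgradient of v at x₀ and strong subgradient inequality for w
  obtain ⟨q₀, hq₀⟩ := exists_subgradient hΩo hv_conv (hv_cont.mono subset_closure) hx₀Ω
  set p₀ := q₀ + (2 * ε) • x₀ with hp₀def
  have hwsub : ∀ y ∈ Ω, w x₀ + ⟪p₀, y - x₀⟫ + ε * ‖y - x₀‖ ^ 2 ≤ w y := by
    intro y hy
    have h1 := hq₀ y hy
    have h2 : ‖y‖ ^ 2 = ‖x₀‖ ^ 2 + 2 * ⟪x₀, y - x₀⟫ + ‖y - x₀‖ ^ 2 := by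
      calc ‖y‖ ^ 2 = ‖x₀ + (y - x₀)‖ ^ 2 := by rw [add_sub_cancel]
        _ = ‖x₀‖ ^ 2 + 2 * ⟪x₀, y - x₀⟫ + ‖y - x₀‖ ^ 2 := norm_add_sq_real _ _
    have h3 : ⟪p₀, y - x₀⟫ = ⟪q₀, y - x₀⟫ + 2 * ε * ⟪x₀, y - x₀⟫ := by
      simp only [hp₀def, inner_add_left, real_inner_smul_left]
    have h4 : ε * ‖y‖ ^ 2 = ε * ‖x₀‖ ^ 2 + ε * (2 * ⟪x₀, y - x₀⟫) + ε * ‖y - x₀‖ ^ 2 := by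
      rw [h2]; ring
    simp only [hwdef]
    rw [h3]
    linarith
  -- the key inclusion
  have hsub : Metric.ball p₀ (ε * rr) ⊆ subdiffImage Ω u {x ∈ Ω | u x < v x} := by
    intro p hp
    rw [Metric.mem_ball, dist_eq_norm] at hp
    set g : EuclideanSpace ℝ (Fin n) → ℝ := fun y => v y + ε * (‖y‖ ^ 2 - R) - ⟪p, y⟫
      with hgdef
    have hgw : ∀ y, g y = w y - ⟪p, y⟫ := fun y => by simp only [hgdef, hwdef]
    have hinner_cont : Continuous fun y : EuclideanSpace ℝ (Fin n) => ⟪p, y⟫ :=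
      Continuous.inner continuous_const continuous_id
    have hg_cont : ContinuousOn g (closure Ω) := by
      simp only [hgdef]
      exact (hw_cont.mono (le_refl _)).sub hinner_cont.continuousOn
    obtain ⟨x₁, hx₁mem, hx₁min⟩ := (isCompact_closedBall x₀ rr).exists_isMinOn
      ⟨x₀, Metric.mem_closedBall_self hrr.le⟩
      (hg_cont.mono (hcbΩ.trans subset_closure))
    have hx₁Ω : x₁ ∈ Ω := hcbΩ hx₁mem
    have hx₁lt : dist x₁ x₀ < rr := by
      rcases lt_or_eq_of_le (Metric.mem_closedBall.1 hx₁mem) with h | h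
      · exact h
      · exfalso
        have h1 := hwsub x₁ hx₁Ω
        have h3 : ‖x₁ - x₀‖ = rr := by rwa [dist_eq_norm] at h
        have h4 : g x₁ ≤ g x₀ := hx₁min (Metric.mem_closedBall_self hrr.le)
        have h5 : ⟪p, x₁ - x₀⟫ = ⟪p, x₁⟫ - ⟪p, x₀⟫ := inner_sub_right _ _ _
        have h6 : ⟪p₀ - p, x₁ - x₀⟫ = ⟪p₀, x₁ - x₀⟫ - ⟪p, x₁ - x₀⟫ := inner_sub_left _ _ _
        have h7 : |⟪p₀ - p, x₁ - x₀⟫| ≤ ‖p₀ - p‖ * ‖x₁ - x₀‖ := abs_real_inner_le_norm _ _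
        have h8 : ‖p₀ - p‖ = ‖p - p₀‖ := norm_sub_rev _ _
        rw [hgw, hgw] at h4
        rw [h8, h3] at h7
        have h9 : ‖p - p₀‖ * rr < ε * rr * rr := mul_lt_mul_of_pos_right hp hrr
        have h10 := neg_abs_le ⟪p₀ - p, x₁ - x₀⟫
        rw [h3] at h1
        nlinarith [h1, h4, h5, h6, h7, h9, h10]
    have hgconv : ConvexOn ℝ Ω g := aux_convexOn hΩc hv_conv hε.le R p
    have hloc : IsLocalMinOn g Ω x₁ := by
      have h8 : Metric.closedBall x₀ rr ∈ nhds x₁ :=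
        Filter.mem_of_superset (Metric.isOpen_ball.mem_nhds (Metric.mem_ball.2 hx₁lt))
          Metric.ball_subset_closedBall
      exact Filter.eventually_of_mem (nhdsWithin_le_nhds h8) fun y hy => hx₁min hy
    have hglobal : IsMinOn g Ω x₁ := IsMinOn.of_isLocalMinOn_of_convexOn hx₁Ω hloc hgconv
    have hwsub1 : ∀ y ∈ Ω, w x₁ + ⟪p, y - x₁⟫ ≤ w y := by
      intro y hy
      have h1 : g x₁ ≤ g y := hglobal hy
      rw [hgw, hgw] at h1
      have h2 : ⟪p, y - x₁⟫ = ⟪p, y⟫ - ⟪p, x₁⟫ := inner_sub_right _ _ _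
      linarith
    have hwsub1' : ∀ y ∈ closure Ω, w x₁ + ⟪p, y - x₁⟫ ≤ w y := by
      intro y hy
      have hGc : ContinuousOn (fun y => w y - (w x₁ + ⟪p, y - x₁⟫)) (closure Ω) := by
        apply hw_cont.sub
        apply ContinuousOn.add continuousOn_const
        exact (Continuous.inner continuous_const (continuous_id.sub continuous_const)).continuousOn
      have := le_on_closure' hGc (fun z hz => by linarith [hwsub1 z hz]) hy
      linarith
    -- minimize u - ⟪p,·⟫ over the closure
    set g2 : EuclideanSpace ℝ (Fin n) → ℝ := fun y => u y - ⟪p, y⟫ with hg2def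
    obtain ⟨xb, hxbmem, hxbmin⟩ := hΩb.isCompact_closure.exists_isMinOn
      ⟨x₀, subset_closure hx₀Ω⟩ (hu_cont.sub hinner_cont.continuousOn)
    have hx₁E : u x₁ < w x₁ := (hcb hx₁mem).2
    have hxbE : xb ∈ Ω ∧ u xb < w xb := by
      by_contra hcon2
      have hxbge : w xb ≤ u xb := by
        by_cases hb' : xb ∈ Ω
        · push_neg at hcon2
          exact hcon2 hb'
        · have hfr : xb ∈ frontier Ω := by
            rw [frontier, hΩo.interior_eq]
            exact ⟨hxbmem, hb'⟩
          exact le_trans (hwv xb hxbmem) (hbd xb hfr)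
      have hA : u xb - ⟪p, xb⟫ ≤ u x₁ - ⟪p, x₁⟫ := hxbmin (subset_closure hx₁Ω)
      have hB := hwsub1' xb hxbmem
      have h5 : ⟪p, xb - x₁⟫ = ⟪p, xb⟫ - ⟪p, x₁⟫ := inner_sub_right _ _ _
      linarith
    obtain ⟨hxbΩ, hxblt⟩ := hxbE
    have hxbltv : u xb < v xb := lt_of_lt_of_le hxblt (hwv xb hxbmem)
    rw [subdiffImage]
    refine Set.mem_iUnion₂.2 ⟨xb, ⟨hxbΩ, hxbltv⟩, fun y hy => ?_⟩
    have h1 : u xb - ⟪p, xb⟫ ≤ u y - ⟪p, y⟫ := hxbmin (subset_closure hy)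
    have h5 : ⟪p, y - xb⟫ = ⟪p, y⟫ - ⟪p, xb⟫ := inner_sub_right _ _ _
    linarith
  -- conclusion
  have h0 : volume (Metric.ball p₀ (ε * rr)) = 0 :=
    le_antisymm (le_trans (measure_mono hsub) hmass.le) zero_le
  have hpos := Metric.measure_ball_pos volume p₀ (by positivity : 0 < ε * rr)
  rw [h0] at hpos
  exact lt_irrefl _ hpos
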